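/- Let L > 0, let a < c be real numbers, and let h : [a,c] → ℝ be an L-Lipschitz function (|h(x) − h(y)| ≤ L|x − y| for all x, y ∈ [a,c]) such that h(x) > x for every x ∈ [a,c) and c is the unique fixed point of h in [a,c]. Fix t with 0 < t ≤ 1/(1+L), let x₀ ∈ [a,c], and define x_{n+1} = (1−t)·x_n + t·h(x_n) for all n ≥ 0. Then the sequence (x_n) converges to c. -/

import Mathlib

/-- Krasnoselskii iteration for a non-self L-Lipschitz map on `[a,c]` with
`h x > x` on `[a,c)` and `c` the unique fixed point in `[a,c]`:
the iterates converge to `c`. -/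
theorem stmt_0 (L a c t : ℝ) (hL : 0 < L) (hac : a < c) (h : ℝ → ℝ)
    (hlip : ∀ x ∈ Set.Icc a c, ∀ y ∈ Set.Icc a c, |h x - h y| ≤ L * |x - y|)
    (hgt : ∀ x ∈ Set.Ico a c, h x > x)
    (hfix : h c = c)
    (huniq : ∀ x ∈ Set.Icc a c, h x = x → x = c)
    (ht0 : 0 < t) (ht1 : t ≤ 1 / (1 + L))
    (x : ℕ → ℝ) (hx0 : x 0 ∈ Set.Icc a c)
    (hrec : ∀ n, x (n + 1) = (1 - t) * x n + t * h (x n)) :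
    Filter.Tendsto x Filter.atTop (nhds c) := by
  have hL1 : (0:ℝ) < 1 + L := by linarith
  have htL : t * (1 + L) ≤ 1 := (le_div_iff₀ hL1).mp ht1
  have hcmem : c ∈ Set.Icc a c := Set.right_mem_Icc.mpr hac.le
  -- key bounds for one step
  have hstep : ∀ n, x n ∈ Set.Icc a c → x n ≤ h (x n) ∧ h (x n) ≤ c + L * (c - x n) := by
    intro n hn
    obtain ⟨h1, h2⟩ := hn
    constructor
    · rcases lt_or_eq_of_le h2 with hlt | heq
      · exact (hgt _ ⟨h1, hlt⟩).le
      · rw [heq, hfix]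
    · have H := hlip (x n) ⟨h1, h2⟩ c hcmem
      rw [hfix, abs_sub_comm (x n) c,
        abs_of_nonneg (show (0:ℝ) ≤ c - x n from by linarith)] at H
      have := (abs_le.mp H).2
      linarith
  have hmem : ∀ n, x n ∈ Set.Icc a c := by
    intro n; induction n with
    | zero => exact hx0
    | succ n ih =>
      obtain ⟨hge, hle⟩ := hstep n ih
      obtain ⟨h1, h2⟩ := ih
      constructor
      · rw [hrec]
        nlinarith [mul_nonneg ht0.le (sub_nonneg.mpr hge)]
      · rw [hrec]
        nlinarith [mul_le_mul_of_nonneg_left hle ht0.le,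
          mul_nonneg (by linarith : (0:ℝ) ≤ 1 - t * (1 + L))
            (by linarith : (0:ℝ) ≤ c - x n)]
  have hmono : Monotone x := by
    apply monotone_nat_of_le_succ
    intro n
    obtain ⟨hge, _⟩ := hstep n (hmem n)
    rw [hrec]
    nlinarith [mul_nonneg ht0.le (sub_nonneg.mpr hge)]
  have hbdd : BddAbove (Set.range x) := ⟨c, by rintro y ⟨n, rfl⟩; exact (hmem n).2⟩
  set l := ⨆ n, x n with hl
  have hten : Filter.Tendsto x Filter.atTop (nhds l) := tendsto_atTop_ciSup hmono hbdd
  have hl_le : l ≤ c := ciSup_le fun n => (hmem n).2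
  have hl_ge : a ≤ l := le_trans (hmem 0).1 (le_ciSup hbdd 0)
  have hten1 : Filter.Tendsto (fun n => x (n + 1)) Filter.atTop (nhds l) :=
    hten.comp (Filter.tendsto_add_atTop_nat 1)
  have hhten : Filter.Tendsto (fun n => h (x n)) Filter.atTop (nhds l) := by
    have heq : (fun n => h (x n)) = fun n => (x (n + 1) - (1 - t) * x n) / t := by
      funext n; rw [hrec]; field_simp; ring
    rw [heq]
    have := (hten1.sub (hten.const_mul (1 - t))).div_const t
    have hval : (l - (1 - t) * l) / t = l := by field_simp; ring
    rwa [hval] at this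
  have hh2 : Filter.Tendsto (fun n => h (x n)) Filter.atTop (nhds (h l)) := by
    have hb : Filter.Tendsto (fun n => L * |x n - l|) Filter.atTop (nhds 0) := by
      have := ((hten.sub_const l).abs).const_mul L
      simpa using this
    rw [tendsto_iff_dist_tendsto_zero]
    refine squeeze_zero (fun n => dist_nonneg) (fun n => ?_) hb
    rw [Real.dist_eq]
    exact hlip (x n) (hmem n) l ⟨hl_ge, hl_le⟩
  have hfixl : h l = l := tendsto_nhds_unique hh2 hhten
  have hlc : l = c := huniq l ⟨hl_ge, hl_le⟩ hfixl
  rwa [hlc] at hten
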